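/- Identity of degenerate theta-type functions: for F(u,v) = θ(u+(k-1)γ)θ(v+γ)θ(v-kγ) / (θ(u+v)θ(v)θ(γ)), one has F(u,v) + F(-v,-u) = -θ(u-v+(k-1)γ)θ(kγ)/(θ(u)θ(v)), as an identity of meromorphic functions in u and v. -/

import Mathlib

/-- The Jacobi theta function. -/
noncomputable def jtheta (τ u : ℂ) : ℂ :=
  -∑' m : ℤ, Complex.exp ((Real.pi : ℂ) * Complex.I * τ * ((m : ℂ) + 1 / 2) ^ 2 +
      2 * (Real.pi : ℂ) * Complex.I * ((m : ℂ) + 1 / 2) * (u + 1 / 2))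

namespace ThetaDeg

open Complex

/-- A single term of the theta series. -/
noncomputable def jt (τ w : ℂ) (m : ℤ) : ℂ :=
  Complex.exp ((Real.pi : ℂ) * Complex.I * τ * ((m : ℂ) + 1 / 2) ^ 2 +
      2 * (Real.pi : ℂ) * Complex.I * ((m : ℂ) + 1 / 2) * (w + 1 / 2))

lemma jtheta_eq (τ w : ℂ) : jtheta τ w = -∑' m : ℤ, jt τ w m := rfl

lemma jt_eq_jacobi (τ w : ℂ) (m : ℤ) :
    jt τ w m = Complex.exp ((Real.pi : ℂ) * Complex.I * τ / 4
        + (Real.pi : ℂ) * Complex.I * (w + 1 / 2)) *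
      jacobiTheta₂_term m (w + 1 / 2 + τ / 2) τ := by
  rw [jt, jacobiTheta₂_term, ← Complex.exp_add]
  congr 1
  ring

lemma summable_norm_jt {τ : ℂ} (hτ : 0 < τ.im) (w : ℂ) :
    Summable fun m : ℤ => ‖jt τ w m‖ := by
  simp only [jt_eq_jacobi, norm_mul]
  apply Summable.mul_left
  refine Summable.of_nonneg_of_le (fun n => norm_nonneg _) (fun n => ?_)
    (by simpa only [pow_zero, one_mul] using
      summable_pow_mul_jacobiTheta₂_term_bound |(w + 1 / 2 + τ / 2).im| hτ 0)
  simpa only [pow_zero, one_mul] using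
    norm_jacobiTheta₂_term_le hτ (le_refl |(w + 1 / 2 + τ / 2).im|) (le_refl τ.im) n

lemma summable_jt {τ : ℂ} (hτ : 0 < τ.im) (w : ℂ) : Summable fun m : ℤ => jt τ w m :=
  (summable_norm_jt hτ w).of_norm

/-- The index type for fourfold products. -/
abbrev T4 := (ℤ × ℤ) × ℤ × ℤ

/-- The summand for a product of four theta series. -/
noncomputable def F (τ z₁ z₂ z₃ z₄ : ℂ) (p : T4) : ℂ :=
  jt τ z₁ p.1.1 * jt τ z₂ p.1.2 * (jt τ z₃ p.2.1 * jt τ z₄ p.2.2)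

lemma summable_norm_F {τ : ℂ} (hτ : 0 < τ.im) (z₁ z₂ z₃ z₄ : ℂ) :
    Summable fun p : T4 => ‖F τ z₁ z₂ z₃ z₄ p‖ := by
  have h12 : Summable fun q : ℤ × ℤ => ‖jt τ z₁ q.1 * jt τ z₂ q.2‖ :=
    Summable.mul_norm (summable_norm_jt hτ z₁) (summable_norm_jt hτ z₂)
  have h34 : Summable fun q : ℤ × ℤ => ‖jt τ z₃ q.1 * jt τ z₄ q.2‖ :=
    Summable.mul_norm (summable_norm_jt hτ z₃) (summable_norm_jt hτ z₄)
  have h := Summable.mul_norm h12 h34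
  exact h

lemma summable_F {τ : ℂ} (hτ : 0 < τ.im) (z₁ z₂ z₃ z₄ : ℂ) :
    Summable (F τ z₁ z₂ z₃ z₄) :=
  (summable_norm_F hτ z₁ z₂ z₃ z₄).of_norm

lemma prod4 {τ : ℂ} (hτ : 0 < τ.im) (z₁ z₂ z₃ z₄ : ℂ) :
    jtheta τ z₁ * jtheta τ z₂ * (jtheta τ z₃ * jtheta τ z₄)
      = ∑' p : T4, F τ z₁ z₂ z₃ z₄ p := by
  rw [jtheta_eq, jtheta_eq, jtheta_eq, jtheta_eq, neg_mul_neg, neg_mul_neg,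
    tsum_mul_tsum_of_summable_norm (summable_norm_jt hτ z₁) (summable_norm_jt hτ z₂),
    tsum_mul_tsum_of_summable_norm (summable_norm_jt hτ z₃) (summable_norm_jt hτ z₄),
    tsum_mul_tsum_of_summable_norm
      (Summable.mul_norm (summable_norm_jt hτ z₁) (summable_norm_jt hτ z₂))
      (Summable.mul_norm (summable_norm_jt hτ z₃) (summable_norm_jt hτ z₄))]
  rfl

lemma neg_exp (w : ℂ) : -Complex.exp w = Complex.exp (w + (Real.pi : ℂ) * Complex.I) := by
  rw [Complex.exp_add, Complex.exp_pi_mul_I]; ring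

def negEquiv : ℤ ≃ ℤ := Function.Involutive.toPerm (fun m => -1 - m) (fun m => by ring)

lemma negEquiv_apply (m : ℤ) : negEquiv m = -1 - m := rfl

/-- Oddness of the theta function. -/
lemma jtheta_neg (τ z : ℂ) : jtheta τ (-z) = -jtheta τ z := by
  have hterm : ∀ m : ℤ, jt τ (-z) (negEquiv m) = -jt τ z m := by
    intro m
    rw [negEquiv_apply, jt, jt, neg_exp, Complex.exp_eq_exp_iff_exists_int]
    exact ⟨-(m + 1), by push_cast; ring⟩
  rw [jtheta_eq, jtheta_eq, neg_neg]
  calc -∑' m : ℤ, jt τ (-z) m = -∑' m : ℤ, jt τ (-z) (negEquiv m) := by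
        rw [Equiv.tsum_eq negEquiv (jt τ (-z))]
    _ = -∑' m : ℤ, -jt τ z m := by rw [tsum_congr hterm]
    _ = ∑' m : ℤ, jt τ z m := by rw [tsum_neg, neg_neg]

/-- Termwise identity for the even part. -/
lemma claimA (τ x y a b : ℂ) (m1 m2 m3 m4 d : ℤ) (hd : m1 + m2 - m3 - m4 = 2 * d) :
    jt τ (y + a) (m1 - d) * jt τ (y - a) (m2 - d)
      * (jt τ (x + b) (m3 + d) * jt τ (x - b) (m4 + d))
    = jt τ (x + a) m1 * jt τ (x - a) m2 * (jt τ (y + b) m3 * jt τ (y - b) m4) := by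
  have hdc : (d : ℂ) = ((m1 : ℂ) + m2 - m3 - m4) / 2 := by
    have := congrArg (Int.cast : ℤ → ℂ) hd
    push_cast at this
    linear_combination -this / 2
  simp only [jt, ← Complex.exp_add]
  congr 1
  push_cast
  rw [hdc]
  ring

/-- Termwise identity for the odd part of the first product. -/
lemma claimB (τ x y a b : ℂ) (m1 m2 m3 m4 k1 k2 k3 k4 : ℤ)
    (h1 : 2 * k1 = m1 + m2 + m3 + m4 + 1) (h2 : 2 * k2 = m1 + m2 - m3 - m4 - 1)
    (h3 : 2 * k3 = m1 - m2 + m3 - m4 - 1) (h4 : 2 * k4 = m1 - m2 - m3 + m4 - 1) :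
    jt τ (x + y) k1 * jt τ (x - y) k2 * (jt τ (a + b) k3 * jt τ (a - b) k4)
    = jt τ (x + a) m1 * jt τ (x - a) m2 * (jt τ (y + b) m3 * jt τ (y - b) m4) := by
  have hk1 : (k1 : ℂ) = ((m1 : ℂ) + m2 + m3 + m4 + 1) / 2 := by
    have := congrArg (Int.cast : ℤ → ℂ) h1; push_cast at this; linear_combination this / 2
  have hk2 : (k2 : ℂ) = ((m1 : ℂ) + m2 - m3 - m4 - 1) / 2 := by
    have := congrArg (Int.cast : ℤ → ℂ) h2; push_cast at this; linear_combination this / 2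
  have hk3 : (k3 : ℂ) = ((m1 : ℂ) - m2 + m3 - m4 - 1) / 2 := by
    have := congrArg (Int.cast : ℤ → ℂ) h3; push_cast at this; linear_combination this / 2
  have hk4 : (k4 : ℂ) = ((m1 : ℂ) - m2 - m3 + m4 - 1) / 2 := by
    have := congrArg (Int.cast : ℤ → ℂ) h4; push_cast at this; linear_combination this / 2
  simp only [jt, ← Complex.exp_add]
  rw [Complex.exp_eq_exp_iff_exists_int]
  refine ⟨m1 - k1, ?_⟩
  push_cast
  rw [hk1, hk2, hk3, hk4]
  ring

/-- Termwise identity for the odd part of the second product. -/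
lemma claimC (τ x y a b : ℂ) (m1 m2 m3 m4 k1 k2 k3 k4 : ℤ)
    (h1 : 2 * k1 = m1 + m2 + m3 + m4 + 1) (h2 : 2 * k2 = -m1 - m2 + m3 + m4 - 1)
    (h3 : 2 * k3 = m1 - m2 + m3 - m4 - 1) (h4 : 2 * k4 = m1 - m2 - m3 + m4 - 1) :
    jt τ (x + y) k1 * jt τ (x - y) k2 * (jt τ (a + b) k3 * jt τ (a - b) k4)
    = -(jt τ (y + a) m1 * jt τ (y - a) m2 * (jt τ (x + b) m3 * jt τ (x - b) m4)) := by
  have hk1 : (k1 : ℂ) = ((m1 : ℂ) + m2 + m3 + m4 + 1) / 2 := by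
    have := congrArg (Int.cast : ℤ → ℂ) h1; push_cast at this; linear_combination this / 2
  have hk2 : (k2 : ℂ) = (-(m1 : ℂ) - m2 + m3 + m4 - 1) / 2 := by
    have := congrArg (Int.cast : ℤ → ℂ) h2; push_cast at this; linear_combination this / 2
  have hk3 : (k3 : ℂ) = ((m1 : ℂ) - m2 + m3 - m4 - 1) / 2 := by
    have := congrArg (Int.cast : ℤ → ℂ) h3; push_cast at this; linear_combination this / 2
  have hk4 : (k4 : ℂ) = ((m1 : ℂ) - m2 - m3 + m4 - 1) / 2 := by
    have := congrArg (Int.cast : ℤ → ℂ) h4; push_cast at this; linear_combination this / 2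
  simp only [jt, ← Complex.exp_add]
  rw [neg_exp, Complex.exp_eq_exp_iff_exists_int]
  refine ⟨-m2 - 1, ?_⟩
  push_cast
  rw [hk1, hk2, hk3, hk4]
  ring

/-- The even-sum set. -/
def S : Set T4 := {p | (p.1.1 + p.1.2 + p.2.1 + p.2.2) % 2 = 0}

def mapA (p : T4) : T4 :=
  ((p.1.1 - (p.1.1 + p.1.2 - p.2.1 - p.2.2) / 2, p.1.2 - (p.1.1 + p.1.2 - p.2.1 - p.2.2) / 2),
    (p.2.1 + (p.1.1 + p.1.2 - p.2.1 - p.2.2) / 2, p.2.2 + (p.1.1 + p.1.2 - p.2.1 - p.2.2) / 2))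

def mapB (p : T4) : T4 :=
  (((p.1.1 + p.1.2 + p.2.1 + p.2.2 + 1) / 2, (p.1.1 + p.1.2 - p.2.1 - p.2.2 - 1) / 2),
    ((p.1.1 - p.1.2 + p.2.1 - p.2.2 - 1) / 2, (p.1.1 - p.1.2 - p.2.1 + p.2.2 - 1) / 2))

def mapC (p : T4) : T4 :=
  (((p.1.1 + p.1.2 + p.2.1 + p.2.2 + 1) / 2, (-p.1.1 - p.1.2 + p.2.1 + p.2.2 - 1) / 2),
    ((p.1.1 - p.1.2 + p.2.1 - p.2.2 - 1) / 2, (p.1.1 - p.1.2 - p.2.1 + p.2.2 - 1) / 2))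

def mapCinv (p : T4) : T4 :=
  (((p.1.1 - p.1.2 + p.2.1 + p.2.2) / 2, (p.1.1 - p.1.2 - p.2.1 - p.2.2) / 2 - 1),
    ((p.1.1 + p.1.2 + p.2.1 - p.2.2) / 2, (p.1.1 + p.1.2 - p.2.1 + p.2.2) / 2))

def eA : ↥S ≃ ↥S where
  toFun q := ⟨mapA q.1, by
    have h := q.2
    simp only [S, Set.mem_setOf_eq, mapA] at *
    omega⟩
  invFun q := ⟨mapA q.1, by
    have h := q.2
    simp only [S, Set.mem_setOf_eq, mapA] at *
    omega⟩
  left_inv q := by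
    rcases q with ⟨⟨⟨m1, m2⟩, m3, m4⟩, h⟩
    simp only [S, Set.mem_setOf_eq] at h
    apply Subtype.ext
    simp only [mapA, Prod.mk.injEq]
    omega
  right_inv q := by
    rcases q with ⟨⟨⟨m1, m2⟩, m3, m4⟩, h⟩
    simp only [S, Set.mem_setOf_eq] at h
    apply Subtype.ext
    simp only [mapA, Prod.mk.injEq]
    omega

def eB : ↥Sᶜ ≃ ↥Sᶜ where
  toFun q := ⟨mapB q.1, by
    have h := q.2
    simp only [S, Set.mem_compl_iff, Set.mem_setOf_eq, mapB] at *
    omega⟩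
  invFun q := ⟨mapB q.1, by
    have h := q.2
    simp only [S, Set.mem_compl_iff, Set.mem_setOf_eq, mapB] at *
    omega⟩
  left_inv q := by
    rcases q with ⟨⟨⟨m1, m2⟩, m3, m4⟩, h⟩
    simp only [S, Set.mem_compl_iff, Set.mem_setOf_eq] at h
    apply Subtype.ext
    simp only [mapB, Prod.mk.injEq]
    omega
  right_inv q := by
    rcases q with ⟨⟨⟨m1, m2⟩, m3, m4⟩, h⟩
    simp only [S, Set.mem_compl_iff, Set.mem_setOf_eq] at h
    apply Subtype.ext
    simp only [mapB, Prod.mk.injEq]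
    omega

def eC : ↥Sᶜ ≃ ↥S where
  toFun q := ⟨mapC q.1, by
    have h := q.2
    simp only [S, Set.mem_compl_iff, Set.mem_setOf_eq, mapC] at *
    omega⟩
  invFun q := ⟨mapCinv q.1, by
    have h := q.2
    simp only [S, Set.mem_compl_iff, Set.mem_setOf_eq, mapCinv] at *
    omega⟩
  left_inv q := by
    rcases q with ⟨⟨⟨m1, m2⟩, m3, m4⟩, h⟩
    simp only [S, Set.mem_compl_iff, Set.mem_setOf_eq] at h
    apply Subtype.ext
    simp only [mapC, mapCinv, Prod.mk.injEq]
    omega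
  right_inv q := by
    rcases q with ⟨⟨⟨m1, m2⟩, m3, m4⟩, h⟩
    simp only [S, Set.mem_setOf_eq] at h
    apply Subtype.ext
    simp only [mapC, mapCinv, Prod.mk.injEq]
    omega

/-- The Weierstrass three-term identity for the theta function. -/
lemma weierstrass (τ : ℂ) (hτ : 0 < τ.im) (x y a b : ℂ) :
    jtheta τ (x + a) * jtheta τ (x - a) * (jtheta τ (y + b) * jtheta τ (y - b))
    = jtheta τ (y + a) * jtheta τ (y - a) * (jtheta τ (x + b) * jtheta τ (x - b))
    + jtheta τ (x + y) * jtheta τ (x - y) * (jtheta τ (a + b) * jtheta τ (a - b)) := by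
  rw [prod4 hτ, prod4 hτ, prod4 hτ]
  have s₁ := summable_F hτ (x + a) (x - a) (y + b) (y - b)
  have s₂ := summable_F hτ (y + a) (y - a) (x + b) (x - b)
  have s₃ := summable_F hτ (x + y) (x - y) (a + b) (a - b)
  rw [← Summable.tsum_add_tsum_compl (s := S) (s₁.subtype S) (s₁.subtype Sᶜ),
      ← Summable.tsum_add_tsum_compl (s := S) (s₂.subtype S) (s₂.subtype Sᶜ),
      ← Summable.tsum_add_tsum_compl (s := S) (s₃.subtype S) (s₃.subtype Sᶜ)]
  have hA : (∑' q : ↥S, F τ (x + a) (x - a) (y + b) (y - b) q.1)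
      = ∑' q : ↥S, F τ (y + a) (y - a) (x + b) (x - b) q.1 := by
    rw [← Equiv.tsum_eq eA fun q : ↥S => F τ (y + a) (y - a) (x + b) (x - b) q.1]
    refine tsum_congr fun q => ?_
    rcases q with ⟨⟨⟨m1, m2⟩, m3, m4⟩, h⟩
    simp only [S, Set.mem_setOf_eq] at h
    have hd : m1 + m2 - m3 - m4 = 2 * ((m1 + m2 - m3 - m4) / 2) := by omega
    exact (claimA τ x y a b m1 m2 m3 m4 ((m1 + m2 - m3 - m4) / 2) hd).symm
  have hB : (∑' q : ↥Sᶜ, F τ (x + a) (x - a) (y + b) (y - b) q.1)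
      = ∑' q : ↥Sᶜ, F τ (x + y) (x - y) (a + b) (a - b) q.1 := by
    rw [← Equiv.tsum_eq eB fun q : ↥Sᶜ => F τ (x + y) (x - y) (a + b) (a - b) q.1]
    refine tsum_congr fun q => ?_
    rcases q with ⟨⟨⟨m1, m2⟩, m3, m4⟩, h⟩
    simp only [S, Set.mem_compl_iff, Set.mem_setOf_eq] at h
    refine (claimB τ x y a b m1 m2 m3 m4
      ((m1 + m2 + m3 + m4 + 1) / 2) ((m1 + m2 - m3 - m4 - 1) / 2)
      ((m1 - m2 + m3 - m4 - 1) / 2) ((m1 - m2 - m3 + m4 - 1) / 2)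
      ?_ ?_ ?_ ?_).symm <;> omega
  have hC : (∑' q : ↥S, F τ (x + y) (x - y) (a + b) (a - b) q.1)
      = -∑' q : ↥Sᶜ, F τ (y + a) (y - a) (x + b) (x - b) q.1 := by
    rw [← Equiv.tsum_eq eC fun q : ↥S => F τ (x + y) (x - y) (a + b) (a - b) q.1,
        ← tsum_neg]
    refine tsum_congr fun q => ?_
    rcases q with ⟨⟨⟨m1, m2⟩, m3, m4⟩, h⟩
    simp only [S, Set.mem_compl_iff, Set.mem_setOf_eq] at h
    refine claimC τ x y a b m1 m2 m3 m4
      ((m1 + m2 + m3 + m4 + 1) / 2) ((-m1 - m2 + m3 + m4 - 1) / 2)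
      ((m1 - m2 + m3 - m4 - 1) / 2) ((m1 - m2 - m3 + m4 - 1) / 2)
      ?_ ?_ ?_ ?_ <;> omega
  rw [hA, hB, hC]
  ring

end ThetaDeg

open ThetaDeg in
/-- For `F(u,v) = θ(u+(k-1)γ)θ(v+γ)θ(v-kγ) / (θ(u+v)θ(v)θ(γ))` one has
`F(u,v) + F(-v,-u) = -θ(u-v+(k-1)γ)θ(kγ)/(θ(u)θ(v))`, as an identity of
meromorphic functions of `u` and `v`. -/
theorem theta_degeneration_identity (τ γ u v : ℂ) (hτ : 0 < τ.im) (k : ℕ) (hk : 1 ≤ k)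
    (hγ : jtheta τ γ ≠ 0) (huv : jtheta τ (u + v) ≠ 0)
    (hu : jtheta τ u ≠ 0) (hv : jtheta τ v ≠ 0) :
    jtheta τ (u + ((k : ℂ) - 1) * γ) * jtheta τ (v + γ) * jtheta τ (v - (k : ℂ) * γ) /
        (jtheta τ (u + v) * jtheta τ v * jtheta τ γ) +
      jtheta τ (-v + ((k : ℂ) - 1) * γ) * jtheta τ (-u + γ) * jtheta τ (-u - (k : ℂ) * γ) /
        (jtheta τ (-v + -u) * jtheta τ (-u) * jtheta τ γ) =
    -(jtheta τ (u - v + ((k : ℂ) - 1) * γ) * jtheta τ ((k : ℂ) * γ)) /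
      (jtheta τ u * jtheta τ v) := by
  set κ := (k : ℂ) with hκ
  have W := weierstrass τ hτ ((u + v - γ) / 2) ((u + v + γ) / 2)
    ((u - v + (2 * κ - 1) * γ) / 2) ((v - u + γ) / 2)
  rw [show (u + v - γ) / 2 + (u - v + (2 * κ - 1) * γ) / 2 = u + (κ - 1) * γ by ring,
      show (u + v - γ) / 2 - (u - v + (2 * κ - 1) * γ) / 2 = v - κ * γ by ring,
      show (u + v + γ) / 2 + (v - u + γ) / 2 = v + γ by ring,
      show (u + v + γ) / 2 - (v - u + γ) / 2 = u by ring,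
      show (u + v + γ) / 2 + (u - v + (2 * κ - 1) * γ) / 2 = u + κ * γ by ring,
      show (u + v + γ) / 2 - (u - v + (2 * κ - 1) * γ) / 2 = v - (κ - 1) * γ by ring,
      show (u + v - γ) / 2 + (v - u + γ) / 2 = v by ring,
      show (u + v - γ) / 2 - (v - u + γ) / 2 = u - γ by ring,
      show (u + v - γ) / 2 + (u + v + γ) / 2 = u + v by ring,
      show (u + v - γ) / 2 - (u + v + γ) / 2 = -γ by ring,
      show (u - v + (2 * κ - 1) * γ) / 2 + (v - u + γ) / 2 = κ * γ by ring,
      show (u - v + (2 * κ - 1) * γ) / 2 - (v - u + γ) / 2 = u - v + (κ - 1) * γ by ring,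
      jtheta_neg] at W
  rw [show -v + (κ - 1) * γ = -(v - (κ - 1) * γ) by ring,
      show -u + γ = -(u - γ) by ring,
      show -u - κ * γ = -(u + κ * γ) by ring,
      show -v + -u = -(u + v) by ring,
      jtheta_neg, jtheta_neg, jtheta_neg, jtheta_neg, jtheta_neg]
  field_simp
  linear_combination W
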